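/- Let (X,Y) be a random vector, and let (X₁,Y₁), (X₂,Y₂), (X₃,Y₃) be independent copies. Define μ₁ = P(Y₁ ∧ Y₂ < Y₃ ≤ Y₁ ∨ Y₂ | X₁ = X₂) and μ₂ = P(Y₁ < Y₂ ≤ Y₃), where the conditioning P(· | X₁ = X₂) means: draw X from the law of X₁, then draw Y₁, Y₂ independently from the conditional law of Y given that common X. If Y is not almost surely constant, then the Dette–Siburg–Stoimenov measure ξ = [∫ Var(E[1_{[y,∞)}(Y) | X]) dP^Y(y)] / [∫ Var(1_{[y,∞)}(Y)) dP^Y(y)] satisfies ξ = 1 − μ₁/(2μ₂). -/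

import Mathlib

open MeasureTheory ProbabilityTheory Set
open scoped ENNReal

namespace DSSaux

variable {μ : Measure ℝ} [IsProbabilityMeasure μ]

lemma bdd_int {α : Type*} [MeasurableSpace α] {ν : Measure α} [IsFiniteMeasure ν]
    {f : α → ℝ} (hf : AEStronglyMeasurable f ν) (C : ℝ)
    (h : ∀ x, |f x| ≤ C) : Integrable f ν :=
  (integrable_const C).mono' hf (ae_of_all _ h)

lemma toReal_le_one (s : Set ℝ) : (μ s).toReal ≤ 1 := by
  have h := (ENNReal.toReal_le_toReal (measure_ne_top μ s) ENNReal.one_ne_top).mpr prob_le_one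
  simpa using h

lemma int_ici (c : ℝ) : ∫ y, (if c ≤ y then (1:ℝ) else 0) ∂μ = (μ (Ici c)).toReal := by
  have h : (fun y => if c ≤ y then (1:ℝ) else 0) = (Ici c).indicator (fun _ => 1) := by
    ext y; simp [indicator, mem_Ici]
  rw [h, integral_indicator_const _ measurableSet_Ici, smul_eq_mul, mul_one]
  rfl

lemma int_lt (c : ℝ) : ∫ y, (if y < c then (1:ℝ) else 0) ∂μ = (μ (Iio c)).toReal := by
  have h : (fun y => if y < c then (1:ℝ) else 0) = (Iio c).indicator (fun _ => 1) := by
    ext y; simp [indicator, mem_Iio]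
  rw [h, integral_indicator_const _ measurableSet_Iio, smul_eq_mul, mul_one]
  rfl

lemma iio_toReal (c : ℝ) : (μ (Iio c)).toReal = 1 - (μ (Ici c)).toReal := by
  have h := measure_compl (measurableSet_Ici (a := c)) (measure_ne_top μ _)
  rw [compl_Ici] at h
  rw [h, measure_univ, ENNReal.toReal_sub_of_le prob_le_one ENNReal.one_ne_top,
    ENNReal.toReal_one]

lemma iio_zero_of_ici_one {c : ℝ} (h : μ (Ici c) = 1) : μ (Iio c) = 0 := by
  have h2 := measure_compl (measurableSet_Ici (a := c)) (measure_ne_top μ _)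
  rw [compl_Ici, h, measure_univ, tsub_self] at h2
  exact h2

/-- The indicator identity `1[min < y₃ ≤ max] = a + b - 2ab`. -/
lemma ind_id (y₁ y₂ y₃ : ℝ) :
    (if min y₁ y₂ < y₃ ∧ y₃ ≤ max y₁ y₂ then (1:ℝ) else 0)
      = (if y₃ ≤ y₁ then (1:ℝ) else 0) + (if y₃ ≤ y₂ then (1:ℝ) else 0)
        - 2 * ((if y₃ ≤ y₁ then (1:ℝ) else 0) * (if y₃ ≤ y₂ then (1:ℝ) else 0)) := by
  rcases le_or_gt y₃ y₁ with a | a <;> rcases le_or_gt y₃ y₂ with b | b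
  · have hc : ¬(min y₁ y₂ < y₃ ∧ y₃ ≤ max y₁ y₂) :=
      fun hh => absurd hh.1 (not_lt.mpr (le_min a b))
    simp only [if_pos a, if_pos b, if_neg hc]; norm_num
  · have hc : min y₁ y₂ < y₃ ∧ y₃ ≤ max y₁ y₂ :=
      ⟨(min_le_right y₁ y₂).trans_lt b, a.trans (le_max_left _ _)⟩
    simp only [if_pos a, if_neg (not_le.mpr b), if_pos hc]; norm_num
  · have hc : min y₁ y₂ < y₃ ∧ y₃ ≤ max y₁ y₂ :=
      ⟨(min_le_left y₁ y₂).trans_lt a, b.trans (le_max_right _ _)⟩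
    simp only [if_neg (not_le.mpr a), if_pos b, if_pos hc]; norm_num
  · have hc : ¬(min y₁ y₂ < y₃ ∧ y₃ ≤ max y₁ y₂) :=
      fun hh => absurd hh.2 (not_le.mpr (max_lt a b))
    simp only [if_neg (not_le.mpr a), if_neg (not_le.mpr b), if_neg hc]; norm_num

/-- Swap the outer and innermost integrals in a triple integral of a bounded
measurable function. -/
lemma swap3 (ν₁ ν₂ ν₃ : Measure ℝ) [IsProbabilityMeasure ν₁] [IsProbabilityMeasure ν₂]
    [IsProbabilityMeasure ν₃] (f : ℝ → ℝ → ℝ → ℝ)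
    (hf : Measurable fun p : ℝ × ℝ × ℝ => f p.1 p.2.1 p.2.2)
    (hbd : ∀ a b c, |f a b c| ≤ 1) :
    (∫ a, ∫ b, ∫ c, f a b c ∂ν₃ ∂ν₂ ∂ν₁) = ∫ c, ∫ a, ∫ b, f a b c ∂ν₂ ∂ν₁ ∂ν₃ := by
  have step1 : ∀ a, (∫ b, ∫ c, f a b c ∂ν₃ ∂ν₂) = ∫ c, ∫ b, f a b c ∂ν₂ ∂ν₃ := by
    intro a
    have hm : Measurable fun q : ℝ × ℝ => f a q.1 q.2 :=
      hf.comp (measurable_const.prodMk measurable_id)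
    exact integral_integral_swap
      (bdd_int hm.aestronglyMeasurable 1 (fun q => hbd a q.1 q.2))
  rw [integral_congr_ae (ae_of_all _ step1)]
  -- now swap a and c
  have hg : Measurable fun q : (ℝ × ℝ) × ℝ => f q.1.1 q.2 q.1.2 :=
    hf.comp ((measurable_fst.fst).prodMk (measurable_snd.prodMk measurable_fst.snd))
  have hsm : StronglyMeasurable fun q : ℝ × ℝ => ∫ b, f q.1 b q.2 ∂ν₂ :=
    hg.stronglyMeasurable.integral_prod_right'
  have hbd2 : ∀ q : ℝ × ℝ, |∫ b, f q.1 b q.2 ∂ν₂| ≤ 1 := by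
    intro q
    have h := norm_integral_le_of_norm_le_const (μ := ν₂)
      (f := fun b => f q.1 b q.2) (C := 1) (ae_of_all _ fun b => by
        simpa [Real.norm_eq_abs] using hbd q.1 b q.2)
    simpa [Real.norm_eq_abs] using h
  exact integral_integral_swap (bdd_int hsm.aestronglyMeasurable 1 hbd2)

/-- Computation of `μ₂`. -/
lemma mu2_eq :
    (∫ y₁, ∫ y₂, ∫ y₃, (if y₁ < y₂ ∧ y₂ ≤ y₃ then (1:ℝ) else 0) ∂μ ∂μ ∂μ)
      = ∫ y, ((μ (Ici y)).toReal - (μ (Ici y)).toReal ^ 2) ∂μ := by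
  have hGanti : Antitone fun y : ℝ => (μ (Ici y)).toReal := fun a b hab =>
    ENNReal.toReal_mono (measure_ne_top _ _) (measure_mono (Ici_subset_Ici.mpr hab))
  have hGm : Measurable fun y : ℝ => (μ (Ici y)).toReal := hGanti.measurable
  have step1 : ∀ y₁, (∫ y₂, ∫ y₃, (if y₁ < y₂ ∧ y₂ ≤ y₃ then (1:ℝ) else 0) ∂μ ∂μ)
      = ∫ y₂, (if y₁ < y₂ then (μ (Ici y₂)).toReal else 0) ∂μ := by
    intro y₁
    refine integral_congr_ae (ae_of_all _ fun y₂ => ?_)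
    by_cases h : y₁ < y₂
    · simp only [h, true_and, if_true]
      exact int_ici y₂
    · simp only [h, false_and, if_false, integral_zero]
  rw [integral_congr_ae (ae_of_all _ step1)]
  have hswap : (∫ y₁, ∫ y₂, (if y₁ < y₂ then (μ (Ici y₂)).toReal else 0) ∂μ ∂μ)
      = ∫ y₂, ∫ y₁, (if y₁ < y₂ then (μ (Ici y₂)).toReal else 0) ∂μ ∂μ := by
    refine integral_integral_swap (bdd_int ?_ 1 ?_)
    · exact (Measurable.ite (measurableSet_lt measurable_fst measurable_snd)
        (hGm.comp measurable_snd) measurable_const).aestronglyMeasurable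
    · rintro ⟨y₁, y₂⟩
      by_cases h : y₁ < y₂ <;> simp [Function.uncurry, h, abs_of_nonneg,
        ENNReal.toReal_nonneg, toReal_le_one]
  rw [hswap]
  refine integral_congr_ae (ae_of_all _ fun y₂ => ?_)
  dsimp only
  have h1 : (fun y₁ => if y₁ < y₂ then (μ (Ici y₂)).toReal else 0)
      = fun y₁ => (if y₁ < y₂ then (1:ℝ) else 0) * (μ (Ici y₂)).toReal := by
    ext y₁; by_cases h : y₁ < y₂ <;> simp [h]
  rw [h1, integral_mul_const, int_lt, iio_toReal]
  ring

end DSSaux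

open DSSaux

/-- If the law `μ` of `Y` is not a point mass, the denominator is nonzero. -/
lemma DSS_denom_ne_zero (μ : Measure ℝ) [IsProbabilityMeasure μ]
    (hYnc : ¬ ∃ c : ℝ, μ {c} = 1) :
    (∫ y, ((μ (Ici y)).toReal - (μ (Ici y)).toReal ^ 2) ∂μ) ≠ 0 := by
  set G : ℝ → ℝ := fun y => (μ (Ici y)).toReal with hGdef
  have hGanti : Antitone G := fun a b hab =>
    ENNReal.toReal_mono (measure_ne_top _ _) (measure_mono (Ici_subset_Ici.mpr hab))
  have hGm : Measurable G := hGanti.measurable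
  have hG0 : ∀ y, 0 ≤ G y := fun y => ENNReal.toReal_nonneg
  have hG1 : ∀ y, G y ≤ 1 := fun y => toReal_le_one _
  have hnn : ∀ y, 0 ≤ G y - G y ^ 2 := by intro y; nlinarith [hG0 y, hG1 y]
  have hint : Integrable (fun y => G y - G y ^ 2) μ :=
    bdd_int ((hGm.sub (hGm.pow_const 2)).aestronglyMeasurable) 2
      (fun y => by rw [abs_of_nonneg (hnn y)]; nlinarith [hG0 y, hG1 y])
  intro h0
  have hae : ∀ᵐ y ∂μ, G y - G y ^ 2 = 0 := by
    have := (integral_eq_zero_iff_of_nonneg hnn hint).mp h0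
    filter_upwards [this] with y hy using hy
  have hS : μ {y | G y - G y ^ 2 ≠ 0} = 0 := by
    have := ae_iff.mp hae; simpa using this
  -- if 0 < μ (Ici y) < 1 then y is in the bad set
  have hmem : ∀ y, μ (Ici y) ≠ 1 → μ (Ici y) ≠ 0 → y ∈ {y | G y - G y ^ 2 ≠ 0} := by
    intro y h1 h2
    have hpos : 0 < G y := ENNReal.toReal_pos h2 (measure_ne_top _ _)
    have hlt : G y < 1 := by
      have := lt_of_le_of_ne (prob_le_one (μ := μ) (s := Ici y)) h1
      have := (ENNReal.toReal_lt_toReal (measure_ne_top _ _) ENNReal.one_ne_top).mpr this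
      simpa using this
    have : 0 < G y - G y ^ 2 := by nlinarith
    exact ne_of_gt this
  set T1 : Set ℝ := {y | μ (Ici y) = 1} with hT1def
  set T0 : Set ℝ := {y | μ (Ici y) = 0} with hT0def
  have hcover : (univ : Set ℝ) ⊆ T1 ∪ T0 ∪ {y | G y - G y ^ 2 ≠ 0} := by
    intro y _
    by_cases h1 : μ (Ici y) = 1
    · exact Or.inl (Or.inl h1)
    by_cases h2 : μ (Ici y) = 0
    · exact Or.inl (Or.inr h2)
    · exact Or.inr (hmem y h1 h2)
  have hsum : (1 : ℝ≥0∞) ≤ μ T1 + μ T0 := by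
    calc (1 : ℝ≥0∞) = μ univ := (measure_univ).symm
    _ ≤ μ (T1 ∪ T0 ∪ {y | G y - G y ^ 2 ≠ 0}) := measure_mono hcover
    _ ≤ μ (T1 ∪ T0) + μ {y | G y - G y ^ 2 ≠ 0} := measure_union_le _ _
    _ = μ (T1 ∪ T0) := by rw [hS, add_zero]
    _ ≤ μ T1 + μ T0 := measure_union_le _ _
  -- T1 is bounded above
  have hIio_univ : (univ : Set ℝ) = ⋃ n : ℕ, Iio (n : ℝ) := by
    ext y; simp only [mem_univ, mem_iUnion, mem_Iio, true_iff]
    obtain ⟨n, hn⟩ := exists_nat_gt y; exact ⟨n, hn⟩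
  have hIci_univ : (univ : Set ℝ) = ⋃ n : ℕ, Ici (-(n : ℝ)) := by
    ext y; simp only [mem_univ, mem_iUnion, mem_Ici, true_iff]
    obtain ⟨n, hn⟩ := exists_nat_gt (-y); exact ⟨n, by linarith⟩
  have hT1bdd : BddAbove T1 := by
    by_contra hb
    have hall : ∀ y : ℝ, μ (Ici y) = 1 := by
      intro y
      obtain ⟨t, ht, hyt⟩ := not_bddAbove_iff.mp hb y
      have : Ici t ⊆ Ici y := Ici_subset_Ici.mpr hyt.le
      exact le_antisymm prob_le_one (ht ▸ measure_mono this)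
    have : μ univ = 0 := by
      rw [hIio_univ]
      refine le_antisymm (le_trans (measure_iUnion_le _) ?_) zero_le
      simp [iio_zero_of_ici_one (hall _)]
    simp [measure_univ] at this
  have hT0bdd : BddBelow T0 := by
    by_contra hb
    have hall : ∀ y : ℝ, μ (Ici y) = 0 := by
      intro y
      obtain ⟨t, ht, hyt⟩ := not_bddBelow_iff.mp hb y
      exact measure_mono_null (Ici_subset_Ici.mpr hyt.le) ht
    have : μ univ = 0 := by
      rw [hIci_univ]
      refine le_antisymm (le_trans (measure_iUnion_le _) ?_) zero_le
      simp [hall]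
    simp [measure_univ] at this
  -- key endpoint facts
  have hT1sup : ∀ (h : T1.Nonempty), μ (Iio (sSup T1)) = 0 := by
    intro hne
    have hs : ∀ s, s < sSup T1 → μ (Iio s) = 0 := by
      intro s hs
      obtain ⟨t, ht, hst⟩ := exists_lt_of_lt_csSup hne hs
      exact measure_mono_null (Iio_subset_Iio hst.le) (iio_zero_of_ici_one ht)
    have hcov : Iio (sSup T1) = ⋃ n : ℕ, Iio (sSup T1 - 1/(n+1)) := by
      ext y; simp only [mem_Iio, mem_iUnion]
      constructor
      · intro hy
        obtain ⟨n, hn⟩ := exists_nat_one_div_lt (sub_pos.mpr hy)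
        exact ⟨n, by push_cast at hn ⊢; linarith⟩
      · rintro ⟨n, hn⟩
        have : (0:ℝ) < 1/(n+1) := by positivity
        linarith
    rw [hcov]
    refine le_antisymm (le_trans (measure_iUnion_le _) ?_) zero_le
    have : ∀ n : ℕ, μ (Iio (sSup T1 - 1/(n+1))) = 0 := by
      intro n
      refine hs _ ?_
      have : (0:ℝ) < 1/(n+1) := by positivity
      linarith
    simp only [one_div] at this
    simp [this]
  have hT0inf : ∀ (h : T0.Nonempty), μ (Ioi (sInf T0)) = 0 := by
    intro hne
    have hs : ∀ s, sInf T0 < s → μ (Ici s) = 0 := by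
      intro s hs
      obtain ⟨t, ht, hst⟩ := exists_lt_of_csInf_lt hne hs
      exact measure_mono_null (Ici_subset_Ici.mpr hst.le) ht
    have hcov : Ioi (sInf T0) = ⋃ n : ℕ, Ici (sInf T0 + 1/(n+1)) := by
      ext y; simp only [mem_Ioi, mem_iUnion, mem_Ici]
      constructor
      · intro hy
        obtain ⟨n, hn⟩ := exists_nat_one_div_lt (sub_pos.mpr hy)
        exact ⟨n, by push_cast at hn ⊢; linarith⟩
      · rintro ⟨n, hn⟩
        have : (0:ℝ) < 1/(n+1) := by positivity
        linarith
    rw [hcov]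
    refine le_antisymm (le_trans (measure_iUnion_le _) ?_) zero_le
    have : ∀ n : ℕ, μ (Ici (sInf T0 + 1/(n+1))) = 0 := by
      intro n
      refine hs _ ?_
      have : (0:ℝ) < 1/(n+1) := by positivity
      linarith
    simp only [one_div] at this
    simp [this]
  -- case analysis
  rcases T1.eq_empty_or_nonempty with hT1e | hT1ne
  · rcases T0.eq_empty_or_nonempty with hT0e | hT0ne
    · rw [hT1e, hT0e] at hsum; simp at hsum
    · -- T1 empty, T0 nonempty : all mass at c' = sInf T0
      set c' := sInf T0 with hc'def
      have hmass : μ {c'} = 1 := by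
        have h1 : μ T0 ≤ μ {c'} := by
          have hsub : T0 ⊆ {c'} ∪ Ioi c' := by
            intro t ht
            rcases eq_or_lt_of_le (csInf_le hT0bdd ht) with h | h
            · exact Or.inl (by simp [h.symm]; rfl)
            · exact Or.inr h
          calc μ T0 ≤ μ ({c'} ∪ Ioi c') := measure_mono hsub
          _ ≤ μ {c'} + μ (Ioi c') := measure_union_le _ _
          _ = μ {c'} := by rw [hT0inf hT0ne, add_zero]
        rw [hT1e] at hsum
        simp only [measure_empty, zero_add] at hsum
        exact le_antisymm prob_le_one (le_trans hsum h1)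
      exact hYnc ⟨c', hmass⟩
  · rcases T0.eq_empty_or_nonempty with hT0e | hT0ne
    · -- T0 empty, T1 nonempty : all mass at c = sSup T1
      set c := sSup T1 with hcdef
      have hmass : μ {c} = 1 := by
        have h1 : μ T1 ≤ μ {c} := by
          have hsub : T1 ⊆ Iio c ∪ {c} := by
            intro t ht
            rcases eq_or_lt_of_le (le_csSup hT1bdd ht) with h | h
            · exact Or.inr (by simp [h]; rfl)
            · exact Or.inl h
          calc μ T1 ≤ μ (Iio c ∪ {c}) := measure_mono hsub
          _ ≤ μ (Iio c) + μ {c} := measure_union_le _ _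
          _ = μ {c} := by rw [hT1sup hT1ne, zero_add]
        rw [hT0e] at hsum
        simp only [measure_empty, add_zero] at hsum
        exact le_antisymm prob_le_one (le_trans hsum h1)
      exact hYnc ⟨c, hmass⟩
    · -- both nonempty
      set c := sSup T1 with hcdef
      set c' := sInf T0 with hc'def
      have hcc' : c ≤ c' := by
        refine csSup_le hT1ne (fun t1 ht1 => le_csInf hT0ne (fun t0 ht0 => ?_))
        by_contra hlt
        push_neg at hlt
        have : μ (Ici t1) ≤ μ (Ici t0) := measure_mono (Ici_subset_Ici.mpr hlt.le)
        rw [ht1, ht0] at this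
        simp at this
      rcases eq_or_lt_of_le hcc' with heq | hlt
      · -- c = c' : point mass at c
        have hmass : μ {c} = 1 := by
          have hcov2 : (univ : Set ℝ) ⊆ Iio c ∪ {c} ∪ Ioi c' := by
            intro y _
            rcases lt_trichotomy y c with h | h | h
            · exact Or.inl (Or.inl h)
            · exact Or.inl (Or.inr (by simp [h]))
            · exact Or.inr (by rw [← heq]; exact h)
          have : (1:ℝ≥0∞) ≤ μ {c} := by
            calc (1:ℝ≥0∞) = μ univ := (measure_univ).symm
            _ ≤ μ (Iio c ∪ {c} ∪ Ioi c') := measure_mono hcov2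
            _ ≤ μ (Iio c ∪ {c}) + μ (Ioi c') := measure_union_le _ _
            _ ≤ μ (Iio c) + μ {c} + μ (Ioi c') := by
                gcongr; exact measure_union_le _ _
            _ = μ {c} := by rw [hT1sup hT1ne, hT0inf hT0ne, zero_add, add_zero]
          exact le_antisymm prob_le_one this
        exact hYnc ⟨c, hmass⟩
      · -- c < c'
        have hmid : μ (Ioo c c') = 0 := by
          refine measure_mono_null ?_ hS
          intro y hy
          have hy1 : μ (Ici y) ≠ 1 := by
            intro h
            have : y ∈ T1 := h
            have := le_csSup hT1bdd this
            exact absurd hy.1 (not_lt.mpr this)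
          have hy0 : μ (Ici y) ≠ 0 := by
            intro h
            have : y ∈ T0 := h
            have := csInf_le hT0bdd this
            exact absurd hy.2 (not_lt.mpr this)
          exact hmem y hy1 hy0
        have hcov2 : (univ : Set ℝ) ⊆ Iio c ∪ {c} ∪ Ioo c c' ∪ {c'} ∪ Ioi c' := by
          intro y _
          rcases lt_trichotomy y c with h | h | h
          · exact Or.inl (Or.inl (Or.inl (Or.inl h)))
          · exact Or.inl (Or.inl (Or.inl (Or.inr (by simp [h]))))
          rcases lt_trichotomy y c' with h' | h' | h'
          · exact Or.inl (Or.inl (Or.inr ⟨h, h'⟩))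
          · exact Or.inl (Or.inr (by simp [h']))
          · exact Or.inr h'
        have hsum2 : (1:ℝ≥0∞) ≤ μ {c} + μ {c'} := by
          calc (1:ℝ≥0∞) = μ univ := (measure_univ).symm
          _ ≤ μ (Iio c ∪ {c} ∪ Ioo c c' ∪ {c'} ∪ Ioi c') := measure_mono hcov2
          _ ≤ μ (Iio c) + μ {c} + μ (Ioo c c') + μ {c'} + μ (Ioi c') := by
              refine le_trans (measure_union_le _ _) ?_
              gcongr
              refine le_trans (measure_union_le _ _) ?_
              gcongr
              refine le_trans (measure_union_le _ _) ?_
              gcongr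
              exact measure_union_le _ _
          _ = μ {c} + μ {c'} := by
              rw [hT1sup hT1ne, hT0inf hT0ne, hmid, zero_add, add_zero, add_zero]
        have hc'pos : μ {c'} ≠ 0 := by
          intro h
          rw [h, add_zero] at hsum2
          exact hYnc ⟨c, le_antisymm prob_le_one hsum2⟩
        have hcpos : μ {c} ≠ 0 := by
          intro h
          rw [h, zero_add] at hsum2
          exact hYnc ⟨c', le_antisymm prob_le_one hsum2⟩
        -- c' lies in the bad set, contradiction
        have hc'1 : μ (Ici c') ≠ 1 := by
          intro h
          have h2 := iio_zero_of_ici_one (μ := μ) h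
          have : μ {c} ≤ μ (Iio c') := measure_mono (by simp [hlt])
          rw [h2] at this
          exact hcpos (le_antisymm this zero_le)
        have hc'0 : μ (Ici c') ≠ 0 := by
          intro h
          have : μ {c'} ≤ μ (Ici c') := measure_mono (by simp)
          rw [h] at this
          exact hc'pos (le_antisymm this zero_le)
        have : μ {c'} ≤ μ {y | G y - G y ^ 2 ≠ 0} :=
          measure_mono (by intro z hz; simp only [mem_singleton_iff] at hz
                           rw [hz]; exact hmem c' hc'1 hc'0)
        rw [hS] at this
        exact hc'pos (le_antisymm this zero_le)

/-- Computation of `μ₁` as an iterated integral of `2p(1-p)`. -/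
lemma DSS_mu1_eq (μX : Measure ℝ) [IsProbabilityMeasure μX] (κ : Kernel ℝ ℝ)
    [IsMarkovKernel κ] (μY : Measure ℝ) [IsProbabilityMeasure μY] :
    (∫ x, ∫ y₁, ∫ y₂, ∫ y₃,
        (if min y₁ y₂ < y₃ ∧ y₃ ≤ max y₁ y₂ then (1 : ℝ) else 0) ∂μY ∂(κ x) ∂(κ x) ∂μX)
    = ∫ y, ∫ x, (2 * ((κ x (Ici y)).toReal - (κ x (Ici y)).toReal ^ 2)) ∂μX ∂μY := by
  have hfm : Measurable fun p : ℝ × ℝ × ℝ =>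
      (if min p.1 p.2.1 < p.2.2 ∧ p.2.2 ≤ max p.1 p.2.1 then (1:ℝ) else 0) := by
    refine Measurable.ite ?_ measurable_const measurable_const
    exact (measurableSet_lt (measurable_fst.min measurable_snd.fst) measurable_snd.snd).inter
      (measurableSet_le measurable_snd.snd (measurable_fst.max measurable_snd.fst))
  have hbd : ∀ a b c : ℝ, |if min a b < c ∧ c ≤ max a b then (1:ℝ) else 0| ≤ 1 := by
    intro a b c; split_ifs <;> norm_num
  have step1 : ∀ x, (∫ y₁, ∫ y₂, ∫ y₃,
      (if min y₁ y₂ < y₃ ∧ y₃ ≤ max y₁ y₂ then (1 : ℝ) else 0) ∂μY ∂(κ x) ∂(κ x))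
      = ∫ y, (2 * ((κ x (Ici y)).toReal - (κ x (Ici y)).toReal ^ 2)) ∂μY := by
    intro x
    rw [swap3 (κ x) (κ x) μY _ hfm hbd]
    refine integral_congr_ae (ae_of_all _ fun y₃ => ?_)
    dsimp only
    have hAm : Measurable fun t : ℝ => (if y₃ ≤ t then (1:ℝ) else 0) :=
      Measurable.ite (measurableSet_le measurable_const measurable_id)
        measurable_const measurable_const
    have hAint : Integrable (fun t => if y₃ ≤ t then (1:ℝ) else 0) (κ x) :=
      bdd_int hAm.aestronglyMeasurable 1 (fun t => by split_ifs <;> norm_num)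
    have inner2 : ∀ y₁, (∫ y₂, (if min y₁ y₂ < y₃ ∧ y₃ ≤ max y₁ y₂ then (1:ℝ) else 0) ∂(κ x))
        = (if y₃ ≤ y₁ then (1:ℝ) else 0)
          + (1 - 2 * (if y₃ ≤ y₁ then (1:ℝ) else 0)) * ((κ x) (Ici y₃)).toReal := by
      intro y₁
      have hrw : (fun y₂ => (if min y₁ y₂ < y₃ ∧ y₃ ≤ max y₁ y₂ then (1:ℝ) else 0))
          = fun y₂ => (if y₃ ≤ y₁ then (1:ℝ) else 0)
            + (1 - 2 * (if y₃ ≤ y₁ then (1:ℝ) else 0)) * (if y₃ ≤ y₂ then (1:ℝ) else 0) := by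
        ext y₂; rw [ind_id y₁ y₂ y₃]; ring
      rw [hrw]
      have e1 : ∫ y₂, ((if y₃ ≤ y₁ then (1:ℝ) else 0)
            + (1 - 2 * (if y₃ ≤ y₁ then (1:ℝ) else 0)) * (if y₃ ≤ y₂ then (1:ℝ) else 0)) ∂(κ x)
          = (∫ _, (if y₃ ≤ y₁ then (1:ℝ) else 0) ∂(κ x))
            + ∫ y₂, (1 - 2 * (if y₃ ≤ y₁ then (1:ℝ) else 0))
                * (if y₃ ≤ y₂ then (1:ℝ) else 0) ∂(κ x) :=
        integral_add (integrable_const _) (hAint.const_mul _)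
      rw [e1, integral_const, integral_const_mul, int_ici]
      simp
    rw [integral_congr_ae (ae_of_all _ inner2)]
    have e2 : ∫ y₁, ((if y₃ ≤ y₁ then (1:ℝ) else 0)
          + (1 - 2 * (if y₃ ≤ y₁ then (1:ℝ) else 0)) * ((κ x) (Ici y₃)).toReal) ∂(κ x)
        = (∫ y₁, (if y₃ ≤ y₁ then (1:ℝ) else 0) ∂(κ x))
          + ∫ y₁, (1 - 2 * (if y₃ ≤ y₁ then (1:ℝ) else 0)) * ((κ x) (Ici y₃)).toReal ∂(κ x) :=
      integral_add hAint (((integrable_const 1).sub (hAint.const_mul 2)).mul_const _)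
    rw [e2, integral_mul_const]
    have e3 : ∫ y₁, ((1:ℝ) - 2 * (if y₃ ≤ y₁ then (1:ℝ) else 0)) ∂(κ x)
        = (∫ _, (1:ℝ) ∂(κ x)) - ∫ y₁, 2 * (if y₃ ≤ y₁ then (1:ℝ) else 0) ∂(κ x) :=
      integral_sub (integrable_const 1) (hAint.const_mul 2)
    rw [e3, integral_const, integral_const_mul, int_ici]
    simp only [measure_univ, probReal_univ, ENNReal.toReal_one, smul_eq_mul, mul_one, one_smul, one_mul]
    ring
  rw [integral_congr_ae (ae_of_all _ step1)]
  -- swap x and y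
  have hjoint : Measurable fun pr : ℝ × ℝ => κ pr.1 (Ici pr.2) := by
    have h : Measurable fun pr : ℝ × ℝ =>
        (κ.comap Prod.fst measurable_fst) pr (Prod.mk pr ⁻¹' {p : (ℝ×ℝ)×ℝ | p.1.2 ≤ p.2}) :=
      Kernel.measurable_kernel_prodMk_left
        (measurableSet_le (measurable_fst.snd) measurable_snd)
    simpa [Kernel.comap_apply, Ici] using h
  have hjm : Measurable fun pr : ℝ × ℝ =>
      2 * ((κ pr.1 (Ici pr.2)).toReal - (κ pr.1 (Ici pr.2)).toReal ^ 2) := by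
    have h := hjoint.ennreal_toReal
    exact (h.sub (h.pow_const 2)).const_mul 2
  refine integral_integral_swap (bdd_int hjm.aestronglyMeasurable 2 ?_)
  rintro ⟨x, y⟩
  have h0 : (0:ℝ) ≤ (κ x (Ici y)).toReal := ENNReal.toReal_nonneg
  have h1 : (κ x (Ici y)).toReal ≤ 1 := toReal_le_one _
  simp only [Function.uncurry_apply_pair]
  rw [abs_of_nonneg (by nlinarith)]
  nlinarith

theorem stmt_8 (μX : Measure ℝ) [IsProbabilityMeasure μX]
    (κ : Kernel ℝ ℝ) [IsMarkovKernel κ]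
    (μY : Measure ℝ) (hμY : μY = μX.bind (fun x => κ x))
    (hYnc : ¬ ∃ c : ℝ, μY {c} = 1) :
    (∫ y, ((∫ x, ((κ x (Set.Ici y)).toReal) ^ 2 ∂μX) -
          (∫ x, (κ x (Set.Ici y)).toReal ∂μX) ^ 2) ∂μY) /
      (∫ y, ((μY (Set.Ici y)).toReal - ((μY (Set.Ici y)).toReal) ^ 2) ∂μY)
    = 1 -
      (∫ x, ∫ y₁, ∫ y₂, ∫ y₃,
          (if min y₁ y₂ < y₃ ∧ y₃ ≤ max y₁ y₂ then (1 : ℝ) else 0) ∂μY ∂(κ x) ∂(κ x) ∂μX) /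
        (2 * ∫ y₁, ∫ y₂, ∫ y₃, (if y₁ < y₂ ∧ y₂ ≤ y₃ then (1 : ℝ) else 0) ∂μY ∂μY ∂μY) := by
  have hYprob : IsProbabilityMeasure μY := by
    constructor
    rw [hμY, Measure.bind_apply MeasurableSet.univ κ.measurable.aemeasurable]
    simp
  -- marginal identity
  have hG : ∀ y : ℝ, ∫ x, (κ x (Ici y)).toReal ∂μX = (μY (Ici y)).toReal := by
    intro y
    rw [integral_toReal ((κ.measurable_coe measurableSet_Ici).aemeasurable)
      (ae_of_all _ fun x => measure_lt_top _ _)]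
    rw [hμY, Measure.bind_apply measurableSet_Ici κ.measurable.aemeasurable]
  have hpm : ∀ y : ℝ, Measurable fun x => (κ x (Ici y)).toReal := fun y =>
    (κ.measurable_coe measurableSet_Ici).ennreal_toReal
  have hp0 : ∀ x y : ℝ, 0 ≤ (κ x (Ici y)).toReal := fun x y => ENNReal.toReal_nonneg
  have hp1 : ∀ x y : ℝ, (κ x (Ici y)).toReal ≤ 1 := fun x y => toReal_le_one _
  have hpint : ∀ y, Integrable (fun x => (κ x (Ici y)).toReal) μX := fun y =>
    bdd_int (hpm y).aestronglyMeasurable 1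
      (fun x => by rw [abs_of_nonneg (hp0 x y)]; exact hp1 x y)
  have hp2int : ∀ y, Integrable (fun x => (κ x (Ici y)).toReal ^ 2) μX := fun y =>
    bdd_int ((hpm y).pow_const 2).aestronglyMeasurable 1
      (fun x => by rw [abs_of_nonneg (by positivity)]; nlinarith [hp0 x y, hp1 x y])
  have hGanti : Antitone fun y : ℝ => (μY (Ici y)).toReal := fun a b hab =>
    ENNReal.toReal_mono (measure_ne_top _ _) (measure_mono (Ici_subset_Ici.mpr hab))
  have hGm : Measurable fun y : ℝ => (μY (Ici y)).toReal := hGanti.measurable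
  have hG0 : ∀ y : ℝ, 0 ≤ (μY (Ici y)).toReal := fun y => ENNReal.toReal_nonneg
  have hG1 : ∀ y : ℝ, (μY (Ici y)).toReal ≤ 1 := fun y => toReal_le_one _
  have hQanti : Antitone fun y : ℝ => ∫ x, (κ x (Ici y)).toReal ^ 2 ∂μX := by
    intro a b hab
    refine integral_mono (hp2int b) (hp2int a) (fun x => ?_)
    have h := ENNReal.toReal_mono (measure_ne_top (κ x) _)
      (measure_mono (Ici_subset_Ici.mpr hab))
    nlinarith [hp0 x a, hp0 x b]
  have hQm : Measurable fun y : ℝ => ∫ x, (κ x (Ici y)).toReal ^ 2 ∂μX := hQanti.measurable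
  have hQ0 : ∀ y : ℝ, 0 ≤ ∫ x, (κ x (Ici y)).toReal ^ 2 ∂μX := fun y =>
    integral_nonneg (fun x => by positivity)
  have hQ1 : ∀ y : ℝ, (∫ x, (κ x (Ici y)).toReal ^ 2 ∂μX) ≤ 1 := by
    intro y
    calc (∫ x, (κ x (Ici y)).toReal ^ 2 ∂μX) ≤ ∫ _, (1:ℝ) ∂μX :=
        integral_mono (hp2int y) (integrable_const 1)
          (fun x => by nlinarith [hp0 x y, hp1 x y])
    _ = 1 := by simp
  -- integrabilities
  have hint1 : Integrable (fun y => (μY (Ici y)).toReal - (μY (Ici y)).toReal ^ 2) μY :=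
    bdd_int ((hGm.sub (hGm.pow_const 2)).aestronglyMeasurable) 2
      (fun y => by
        rw [abs_of_nonneg (by nlinarith [hG0 y, hG1 y])]
        nlinarith [hG0 y, hG1 y])
  have hint2 : Integrable
      (fun y => (∫ x, (κ x (Ici y)).toReal ^ 2 ∂μX) - (μY (Ici y)).toReal ^ 2) μY :=
    bdd_int ((hQm.sub (hGm.pow_const 2)).aestronglyMeasurable) 2
      (fun y => abs_le.mpr ⟨by nlinarith [hQ0 y, hQ1 y, hG0 y, hG1 y],
        by nlinarith [hQ0 y, hQ1 y, hG0 y, hG1 y]⟩)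
  -- numerator identity
  have hNum : (∫ y, ((∫ x, ((κ x (Set.Ici y)).toReal) ^ 2 ∂μX) -
      (∫ x, (κ x (Set.Ici y)).toReal ∂μX) ^ 2) ∂μY)
      = ∫ y, ((∫ x, (κ x (Ici y)).toReal ^ 2 ∂μX) - (μY (Ici y)).toReal ^ 2) ∂μY := by
    refine integral_congr_ae (ae_of_all _ fun y => ?_)
    dsimp only
    rw [hG y]
  -- μ₂ computation
  have hmu2 : (∫ y₁, ∫ y₂, ∫ y₃, (if y₁ < y₂ ∧ y₂ ≤ y₃ then (1 : ℝ) else 0) ∂μY ∂μY ∂μY)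
      = ∫ y, ((μY (Ici y)).toReal - (μY (Ici y)).toReal ^ 2) ∂μY := mu2_eq
  -- μ₁ computation
  have hmu1 : (∫ x, ∫ y₁, ∫ y₂, ∫ y₃,
      (if min y₁ y₂ < y₃ ∧ y₃ ≤ max y₁ y₂ then (1 : ℝ) else 0) ∂μY ∂(κ x) ∂(κ x) ∂μX)
      = 2 * ((∫ y, ((μY (Ici y)).toReal - (μY (Ici y)).toReal ^ 2) ∂μY) -
          ∫ y, ((∫ x, (κ x (Ici y)).toReal ^ 2 ∂μX) - (μY (Ici y)).toReal ^ 2) ∂μY) := by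
    rw [DSS_mu1_eq μX κ μY]
    have e1 : (∫ y, ∫ x, (2 * ((κ x (Ici y)).toReal - (κ x (Ici y)).toReal ^ 2)) ∂μX ∂μY)
        = ∫ y, (2 * (((μY (Ici y)).toReal - (μY (Ici y)).toReal ^ 2) -
            ((∫ x, (κ x (Ici y)).toReal ^ 2 ∂μX) - (μY (Ici y)).toReal ^ 2))) ∂μY := by
      refine integral_congr_ae (ae_of_all _ fun y => ?_)
      dsimp only
      have e11 : ∫ x, (2 * ((κ x (Ici y)).toReal - (κ x (Ici y)).toReal ^ 2)) ∂μX
          = 2 * ∫ x, ((κ x (Ici y)).toReal - (κ x (Ici y)).toReal ^ 2) ∂μX :=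
        integral_const_mul _ _
      have e12 : ∫ x, ((κ x (Ici y)).toReal - (κ x (Ici y)).toReal ^ 2) ∂μX
          = (∫ x, (κ x (Ici y)).toReal ∂μX) - ∫ x, (κ x (Ici y)).toReal ^ 2 ∂μX :=
        integral_sub (hpint y) (hp2int y)
      rw [e11, e12, hG y]
      ring
    rw [e1]
    have e2 : (∫ y, (2 * (((μY (Ici y)).toReal - (μY (Ici y)).toReal ^ 2) -
          ((∫ x, (κ x (Ici y)).toReal ^ 2 ∂μX) - (μY (Ici y)).toReal ^ 2))) ∂μY)
        = 2 * ∫ y, ((((μY (Ici y)).toReal - (μY (Ici y)).toReal ^ 2) -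
          ((∫ x, (κ x (Ici y)).toReal ^ 2 ∂μX) - (μY (Ici y)).toReal ^ 2))) ∂μY :=
      integral_const_mul _ _
    have e3 : (∫ y, ((((μY (Ici y)).toReal - (μY (Ici y)).toReal ^ 2) -
          ((∫ x, (κ x (Ici y)).toReal ^ 2 ∂μX) - (μY (Ici y)).toReal ^ 2))) ∂μY)
        = (∫ y, ((μY (Ici y)).toReal - (μY (Ici y)).toReal ^ 2) ∂μY) -
          ∫ y, ((∫ x, (κ x (Ici y)).toReal ^ 2 ∂μX) - (μY (Ici y)).toReal ^ 2) ∂μY :=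
      integral_sub hint1 hint2
    rw [e2, e3]
  have hDne : (∫ y, ((μY (Ici y)).toReal - (μY (Ici y)).toReal ^ 2) ∂μY) ≠ 0 :=
    DSS_denom_ne_zero μY hYnc
  rw [hNum, hmu1, hmu2]
  set D := ∫ y, ((μY (Ici y)).toReal - (μY (Ici y)).toReal ^ 2) ∂μY with hD
  set N := ∫ y, ((∫ x, (κ x (Ici y)).toReal ^ 2 ∂μX) - (μY (Ici y)).toReal ^ 2) ∂μY with hN
  field_simp
  ring
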